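/- Let P, Q ∈ ℂ[X] be coprime polynomials with max (natDegree P) (natDegree Q) = 2 (so that z ↦ P(z)/Q(z) is a quadratic rational map). Suppose a, b, c, d ∈ ℂ satisfy: Q.eval a ≠ 0, Q.eval b ≠ 0, Q.eval c ≠ 0, Q.eval d ≠ 0; a ≠ b and c ≠ d; P.eval a = b * Q.eval a and P.eval b = a * Q.eval b; P.eval c = d * Q.eval c and P.eval d = c * Q.eval d. Then ({a, b} : Set ℂ) = ({c, d} : Set ℂ). In other words, a quadratic rational map has at most one periodic cycle of period 2 (among cycles contained in ℂ and avoiding the poles). -/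

import Mathlib

open Polynomial

/-- Pure algebra core: two 2-cycles of the same quadratic rational map have the same
elementary symmetric functions. -/
lemma two_cycle_sm (p0 p1 p2 q0 q1 q2 a b c d : ℂ)
    (htop : p2 ≠ 0 ∨ q2 ≠ 0)
    (hroot : ∀ z : ℂ, q0 + q1*z + q2*z^2 = 0 → p0 + p1*z + p2*z^2 ≠ 0)
    (hQroot : q2 ≠ 0 → ∃ z : ℂ, q0 + q1*z + q2*z^2 = 0)
    (hab : a ≠ b) (hcd : c ≠ d)
    (h1 : p0 + p1*a + p2*a^2 = b*(q0 + q1*a + q2*a^2))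
    (h2 : p0 + p1*b + p2*b^2 = a*(q0 + q1*b + q2*b^2))
    (h3 : p0 + p1*c + p2*c^2 = d*(q0 + q1*c + q2*c^2))
    (h4 : p0 + p1*d + p2*d^2 = c*(q0 + q1*d + q2*d^2)) :
    a + b = c + d ∧ a * b = c * d := by
  have k1 : (a-b) * ((p2*(a+b) + p1 + q0) - q2*(a*b)) = 0 := by linear_combination h1 - h2
  have k2 : (c-d) * ((p2*(c+d) + p1 + q0) - q2*(c*d)) = 0 := by linear_combination h3 - h4
  have k1' : p2*(a+b) + p1 + q0 = q2*(a*b) := by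
    rcases mul_eq_zero.1 k1 with h | h
    · exact absurd (sub_eq_zero.1 h) hab
    · exact sub_eq_zero.1 h
  have k2' : p2*(c+d) + p1 + q0 = q2*(c*d) := by
    rcases mul_eq_zero.1 k2 with h | h
    · exact absurd (sub_eq_zero.1 h) hcd
    · exact sub_eq_zero.1 h
  have sum1 : p2*(a^2+b^2) + p1*(a+b) + 2*p0
      = q2*(a*b)*(a+b) + 2*q1*(a*b) + q0*(a+b) := by linear_combination h1 + h2
  have sum2 : p2*(c^2+d^2) + p1*(c+d) + 2*p0
      = q2*(c*d)*(c+d) + 2*q1*(c*d) + q0*(c+d) := by linear_combination h3 + h4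
  have hA1 : (p2^2 + p2*q1 + q0*q2) * (a+b) = q2*p0 - p2*p1 - p2*q0 - q1*p1 - q1*q0 := by
    linear_combination (-(1:ℂ)/2) * (q2 * sum1 - (2*p2 + 2*q1 + q2*(a+b)) * k1')
  have hA2 : (p2^2 + p2*q1 + q0*q2) * (c+d) = q2*p0 - p2*p1 - p2*q0 - q1*p1 - q1*q0 := by
    linear_combination (-(1:ℂ)/2) * (q2 * sum2 - (2*p2 + 2*q1 + q2*(c+d)) * k2')
  by_cases hq2 : q2 = 0
  · subst hq2
    rcases htop with hp2 | h
    swap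
    · exact absurd rfl h
    have hs : a + b = c + d := by
      apply mul_left_cancel₀ hp2
      linear_combination k1' - k2'
    by_cases hpq : p2 + q1 = 0
    · exfalso
      have hq1 : q1 = -p2 := by linear_combination hpq
      subst hq1
      have hkey : q0^2 + p1*q0 + p0*p2 = 0 := by
        linear_combination (p2/2) * sum1 - ((p2*(a+b) - 2*q0)/2) * k1'
      refine hroot (q0/p2) ?_ ?_
      · field_simp
        ring
      · field_simp
        linear_combination hkey
    · refine ⟨hs, ?_⟩
      apply mul_left_cancel₀ (mul_ne_zero two_ne_zero hpq)
      linear_combination sum2 - sum1 + (p2*(a+b+c+d) + p1 - q0) * hs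
  · by_cases hA : p2^2 + p2*q1 + q0*q2 = 0
    · exfalso
      have hB : q2*p0 - p2*p1 - p2*q0 - q1*p1 - q1*q0 = 0 := by rw [← hA1, hA, zero_mul]
      have hw : q2*(p0*q2 - p2*q0) + (p2+q1)*(p2*q1 - p1*q2) = 0 := by
        linear_combination q2*hB + q1*hA
      by_cases hD : p2*q1 - p1*q2 = 0
      · have hw0 : p0*q2 - p2*q0 = 0 := by
          have h' : q2*(p0*q2 - p2*q0) = 0 := by linear_combination hw - (p2+q1)*hD
          exact (mul_eq_zero.1 h').resolve_left hq2
        obtain ⟨z, hz⟩ := hQroot hq2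
        refine hroot z hz ?_
        have h' : q2 * (p0 + p1*z + p2*z^2) = 0 := by
          linear_combination p2*hz - z*hD + hw0
        exact (mul_eq_zero.1 h').resolve_left hq2
      · set z := (p0*q2 - p2*q0)/(p2*q1 - p1*q2) with hzdef
        have hz : (p2*q1 - p1*q2) * z = p0*q2 - p2*q0 := by
          rw [hzdef]; field_simp
        have hQz : q2 * ((p2*q1-p1*q2)^2 * (q0 + q1*z + q2*z^2)) = 0 := by
          linear_combination (q2*(q1*(p2*q1-p1*q2) + q2*((p2*q1-p1*q2)*z + (p0*q2-p2*q0)))) * hz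
            + ((p2*q1-p1*q2)^2 + q1*(q2*(p0*q2-p2*q0) - p2*(p2*q1-p1*q2))) * hA
            + (q2*(q2*(p0*q2-p2*q0) - p2*(p2*q1-p1*q2))) * hB
        have hQz' : q0 + q1*z + q2*z^2 = 0 := by
          rcases mul_eq_zero.1 hQz with h | h
          · exact absurd h hq2
          · rcases mul_eq_zero.1 h with h' | h'
            · exact absurd (pow_eq_zero_iff two_ne_zero |>.1 h') hD
            · exact h'
        refine hroot z hQz' ?_
        have h' : q2 * (p0 + p1*z + p2*z^2) = 0 := by
          linear_combination p2 * hQz' - hz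
        exact (mul_eq_zero.1 h').resolve_left hq2
    · have hs : a + b = c + d := mul_left_cancel₀ hA (hA1.trans hA2.symm)
      refine ⟨hs, ?_⟩
      apply mul_left_cancel₀ hq2
      linear_combination k2' - k1' + p2*hs

/-- A quadratic rational map has at most one periodic cycle of period 2 (among cycles
contained in `ℂ` and avoiding the poles). -/
theorem quadratic_rational_unique_two_cycle
    (P Q : ℂ[X]) (hcop : IsCoprime P Q)
    (hdeg : max P.natDegree Q.natDegree = 2)
    (a b c d : ℂ)
    (hQa : Q.eval a ≠ 0) (hQb : Q.eval b ≠ 0) (hQc : Q.eval c ≠ 0) (hQd : Q.eval d ≠ 0)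
    (hab : a ≠ b) (hcd : c ≠ d)
    (hPa : P.eval a = b * Q.eval a) (hPb : P.eval b = a * Q.eval b)
    (hPc : P.eval c = d * Q.eval c) (hPd : P.eval d = c * Q.eval d) :
    ({a, b} : Set ℂ) = ({c, d} : Set ℂ) := by
  have hPd2 : P.natDegree ≤ 2 := le_of_le_of_eq (le_max_left _ _) hdeg
  have hQd2 : Q.natDegree ≤ 2 := le_of_le_of_eq (le_max_right _ _) hdeg
  have hPev : ∀ z : ℂ, P.eval z = P.coeff 0 + P.coeff 1 * z + P.coeff 2 * z^2 := by
    intro z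
    rw [eval_eq_sum_range' (lt_of_le_of_lt hPd2 (by norm_num : (2:ℕ) < 3))]
    simp [Finset.sum_range_succ]
  have hQev : ∀ z : ℂ, Q.eval z = Q.coeff 0 + Q.coeff 1 * z + Q.coeff 2 * z^2 := by
    intro z
    rw [eval_eq_sum_range' (lt_of_le_of_lt hQd2 (by norm_num : (2:ℕ) < 3))]
    simp [Finset.sum_range_succ]
  have hnc : ∀ z : ℂ, Q.eval z = 0 → P.eval z ≠ 0 := by
    intro z hQ hP
    obtain ⟨u, v, huv⟩ := hcop
    have h := congrArg (Polynomial.eval z) huv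
    simp [hP, hQ] at h
  have htop : P.coeff 2 ≠ 0 ∨ Q.coeff 2 ≠ 0 := by
    rcases max_choice P.natDegree Q.natDegree with h | h
    · left
      have hnd : P.natDegree = 2 := h ▸ hdeg
      have hP0 : P ≠ 0 := by
        intro h0
        rw [h0] at hnd
        simp at hnd
      rw [← hnd]
      exact mt leadingCoeff_eq_zero.mp hP0
    · right
      have hnd : Q.natDegree = 2 := h ▸ hdeg
      have hQ0 : Q ≠ 0 := by
        intro h0
        rw [h0] at hnd
        simp at hnd
      rw [← hnd]
      exact mt leadingCoeff_eq_zero.mp hQ0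
  have hroot : ∀ z : ℂ, Q.coeff 0 + Q.coeff 1 * z + Q.coeff 2 * z^2 = 0 →
      P.coeff 0 + P.coeff 1 * z + P.coeff 2 * z^2 ≠ 0 := by
    intro z hQ hP
    exact hnc z (by rw [hQev]; exact hQ) (by rw [hPev]; exact hP)
  have hQroot : Q.coeff 2 ≠ 0 → ∃ z : ℂ, Q.coeff 0 + Q.coeff 1 * z + Q.coeff 2 * z^2 = 0 := by
    intro hq2
    have hQ0 : Q ≠ 0 := by
      intro h0
      rw [h0] at hq2
      simp at hq2
    have hdpos : 0 < Q.degree := by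
      rw [degree_eq_natDegree hQ0]
      have : 2 ≤ Q.natDegree := le_natDegree_of_ne_zero hq2
      exact_mod_cast lt_of_lt_of_le (by norm_num) this
    obtain ⟨z, hz⟩ := Complex.exists_root hdpos
    exact ⟨z, by rw [← hQev]; exact hz⟩
  obtain ⟨hs, hm⟩ := two_cycle_sm (P.coeff 0) (P.coeff 1) (P.coeff 2)
    (Q.coeff 0) (Q.coeff 1) (Q.coeff 2) a b c d htop hroot hQroot hab hcd
    (by rw [← hPev, ← hQev]; exact hPa)
    (by rw [← hPev, ← hQev]; exact hPb)
    (by rw [← hPev, ← hQev]; exact hPc)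
    (by rw [← hPev, ← hQev]; exact hPd)
  have hc : (c - a) * (c - b) = 0 := by linear_combination hm - c*hs
  have hd : (d - a) * (d - b) = 0 := by linear_combination hm - d*hs
  rcases mul_eq_zero.1 hc with h | h <;> rcases mul_eq_zero.1 hd with h' | h'
  · exact absurd ((sub_eq_zero.1 h).trans (sub_eq_zero.1 h').symm) hcd
  · rw [sub_eq_zero.1 h, sub_eq_zero.1 h']
  · rw [sub_eq_zero.1 h, sub_eq_zero.1 h']
    exact Set.pair_comm a b
  · exact absurd ((sub_eq_zero.1 h).trans (sub_eq_zero.1 h').symm) hcd
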